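/- Let R₁, R₂ > 0 and t ∈ ℝ. The characteristic polynomial of the 4×4 real matrix with rows (0, (2t−1)/R₁ − 1, 0, t/R₁), (1 − (2t−1)/R₁, 0, −t/R₁, 0), (0, −t/R₂, 0, −t/R₂ − 1), (t/R₂, 0, t/R₂ + 1, 0) equals λ⁴ + ((1−2t)²/R₁² + 2(R₂ − t² − 2tR₂)/(R₁R₂) + t(t + 2R₂)/R₂² + 2)·λ² + (−t² + tR₁ − 2tR₂ + t + R₁R₂ + R₂)²/(R₁²R₂²). -/

import Mathlib

open Matrix Polynomial

theorem my_det_fin_four {R : Type*} [CommRing R] (M : Matrix (Fin 4) (Fin 4) R) :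
    M.det =
      M 0 0 * (M 1 1 * (M 2 2 * M 3 3 - M 2 3 * M 3 2)
             - M 1 2 * (M 2 1 * M 3 3 - M 2 3 * M 3 1)
             + M 1 3 * (M 2 1 * M 3 2 - M 2 2 * M 3 1))
    - M 0 1 * (M 1 0 * (M 2 2 * M 3 3 - M 2 3 * M 3 2)
             - M 1 2 * (M 2 0 * M 3 3 - M 2 3 * M 3 0)
             + M 1 3 * (M 2 0 * M 3 2 - M 2 2 * M 3 0))
    + M 0 2 * (M 1 0 * (M 2 1 * M 3 3 - M 2 3 * M 3 1)
             - M 1 1 * (M 2 0 * M 3 3 - M 2 3 * M 3 0)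
             + M 1 3 * (M 2 0 * M 3 1 - M 2 1 * M 3 0))
    - M 0 3 * (M 1 0 * (M 2 1 * M 3 2 - M 2 2 * M 3 1)
             - M 1 1 * (M 2 0 * M 3 2 - M 2 2 * M 3 0)
             + M 1 2 * (M 2 0 * M 3 1 - M 2 1 * M 3 0)) := by
  simp [Matrix.det_succ_row_zero, Fin.sum_univ_succ, Fin.succAbove, Matrix.submatrix_apply,
    show (Fin.succ 2 : Fin 4) = 3 from rfl, show (Fin.castSucc 2 : Fin 4) = 2 from rfl]
  norm_num
  ring

set_option maxHeartbeats 2000000 in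
theorem my_charpoly_abc (a b c : ℝ) :
    (!![0, a - 1, 0, b;
        1 - a, 0, -b, 0;
        0, -c, 0, -c - 1;
        c, 0, c + 1, 0] : Matrix (Fin 4) (Fin 4) ℝ).charpoly =
      X ^ 4 + C ((a - 1) ^ 2 + (c + 1) ^ 2 - 2 * b * c) * X ^ 2 +
        C (((a - 1) * (c + 1) - b * c) ^ 2) := by
  rw [Matrix.charpoly, my_det_fin_four]
  norm_num [charmatrix_apply, Matrix.diagonal_apply, Matrix.smul_apply, Matrix.one_apply]
  simp (config := { decide := true }) only [map_ofNat, if_true, if_false, Matrix.cons_val, map_zero, map_neg, map_add, map_sub, map_one,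
    show ((2:Fin 4) = 3) = False by simp, show ((3:Fin 4) = 2) = False by simp,
    show ((1:Fin 4) = 2) = False by simp, show ((2:Fin 4) = 1) = False by simp,
    show ((1:Fin 4) = 3) = False by simp, show ((3:Fin 4) = 1) = False by simp,
    show ((0:Fin 4) = 2) = False by simp, show ((2:Fin 4) = 0) = False by simp,
    show ((0:Fin 4) = 3) = False by simp, show ((3:Fin 4) = 0) = False by simp]
  ring

/-- The characteristic polynomial `P⁰₊,₋(λ)` of the linearization of the
classical coupled angular momenta at the fixed point `p₊,₋`. -/
theorem CAM_charpoly_p_plus_minus (R₁ R₂ t : ℝ) (hR₁ : 0 < R₁) (hR₂ : 0 < R₂) :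
    (!![0, (2 * t - 1) / R₁ - 1, 0, t / R₁;
        1 - (2 * t - 1) / R₁, 0, -t / R₁, 0;
        0, -t / R₂, 0, -t / R₂ - 1;
        t / R₂, 0, t / R₂ + 1, 0] : Matrix (Fin 4) (Fin 4) ℝ).charpoly =
      X ^ 4 +
        C ((1 - 2 * t) ^ 2 / R₁ ^ 2 + 2 * (R₂ - t ^ 2 - 2 * t * R₂) / (R₁ * R₂) +
            t * (t + 2 * R₂) / R₂ ^ 2 + 2) * X ^ 2 +
        C ((-t ^ 2 + t * R₁ - 2 * t * R₂ + t + R₁ * R₂ + R₂) ^ 2 / (R₁ ^ 2 * R₂ ^ 2)) := by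
  have hM : (!![0, (2 * t - 1) / R₁ - 1, 0, t / R₁;
        1 - (2 * t - 1) / R₁, 0, -t / R₁, 0;
        0, -t / R₂, 0, -t / R₂ - 1;
        t / R₂, 0, t / R₂ + 1, 0] : Matrix (Fin 4) (Fin 4) ℝ) =
      !![0, (2 * t - 1) / R₁ - 1, 0, t / R₁;
        1 - (2 * t - 1) / R₁, 0, -(t / R₁), 0;
        0, -(t / R₂), 0, -(t / R₂) - 1;
        t / R₂, 0, t / R₂ + 1, 0] := by
    ext i j
    fin_cases i <;> fin_cases j <;> norm_num [neg_div]
  rw [hM, my_charpoly_abc ((2 * t - 1) / R₁) (t / R₁) (t / R₂)]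
  have h2 : (((2 * t - 1) / R₁ - 1) ^ 2 + (t / R₂ + 1) ^ 2 - 2 * (t / R₁) * (t / R₂) : ℝ) =
      (1 - 2 * t) ^ 2 / R₁ ^ 2 + 2 * (R₂ - t ^ 2 - 2 * t * R₂) / (R₁ * R₂) +
        t * (t + 2 * R₂) / R₂ ^ 2 + 2 := by
    field_simp
    ring
  have h0 : ((((2 * t - 1) / R₁ - 1) * (t / R₂ + 1) - t / R₁ * (t / R₂)) ^ 2 : ℝ) =
      (-t ^ 2 + t * R₁ - 2 * t * R₂ + t + R₁ * R₂ + R₂) ^ 2 / (R₁ ^ 2 * R₂ ^ 2) := by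
    field_simp
    ring
  rw [h2, h0]
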